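/- Let (a_p)_{p≥1} and (b_p)_{p≥1} be sequences of nonnegative real numbers indexed by natural numbers p ≥ 1 such that (a_p) converges to a real number a, and such that (b_p) is bounded with liminf_{p→∞} b_p = b. Then liminf_{p→∞} (a_p^p + b_p^p)^{1/p} = max{a, b}, where the exponent p in a_p^p + b_p^p is the same natural number as the sequence index. -/

import Mathlib

open Filter

-- aux lemma 1: x ≤ (x^p + y^p)^(1/p)
lemma aux_le_rpow {x y : ℝ} {p : ℕ} (hp : 1 ≤ p) (hx : 0 ≤ x) (hy : 0 ≤ y) :
    x ≤ (x ^ p + y ^ p) ^ ((p : ℝ)⁻¹) := by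
  have h1 : x = (x ^ p) ^ ((p : ℝ)⁻¹) := (Real.pow_rpow_inv_natCast hx (by omega)).symm
  nth_rewrite 1 [h1]
  exact Real.rpow_le_rpow (by positivity) (le_add_of_nonneg_right (by positivity)) (by positivity)

-- aux lemma 2: (x^p + y^p)^(1/p) ≤ 2^(1/p) * max x y
lemma aux_rpow_le {x y : ℝ} {p : ℕ} (hp : 1 ≤ p) (hx : 0 ≤ x) (hy : 0 ≤ y) :
    (x ^ p + y ^ p) ^ ((p : ℝ)⁻¹) ≤ (2 : ℝ) ^ ((p : ℝ)⁻¹) * max x y := by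
  have hm : (0 : ℝ) ≤ max x y := le_max_of_le_left hx
  have h1 : x ^ p + y ^ p ≤ 2 * (max x y) ^ p := by
    have := pow_le_pow_left₀ hx (le_max_left x y) p
    have := pow_le_pow_left₀ hy (le_max_right x y) p
    nlinarith
  calc (x ^ p + y ^ p) ^ ((p : ℝ)⁻¹) ≤ (2 * (max x y) ^ p) ^ ((p : ℝ)⁻¹) :=
        Real.rpow_le_rpow (by positivity) h1 (by positivity)
    _ = (2 : ℝ) ^ ((p : ℝ)⁻¹) * max x y := by
        rw [Real.mul_rpow (by norm_num) (by positivity),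
          Real.pow_rpow_inv_natCast hm (by omega)]

theorem liminf_rpow_sum_pow_eq_max
    (a b : ℕ → ℝ) (A B : ℝ)
    (ha0 : ∀ p, 1 ≤ p → 0 ≤ a p) (hb0 : ∀ p, 1 ≤ p → 0 ≤ b p)
    (haA : Tendsto a atTop (nhds A))
    (hbBdd : ∃ C, ∀ p, 1 ≤ p → b p ≤ C)
    (hbB : Filter.liminf b atTop = B) :
    Filter.liminf (fun p : ℕ => (a p ^ p + b p ^ p) ^ ((p : ℝ)⁻¹)) atTop = max A B := by
  obtain ⟨C, hC⟩ := hbBdd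
  set c : ℕ → ℝ := fun p => (a p ^ p + b p ^ p) ^ ((p : ℝ)⁻¹) with hc
  have hev1 : ∀ᶠ p in atTop, 1 ≤ p := eventually_ge_atTop 1
  have ha0' : ∀ᶠ p in atTop, 0 ≤ a p := hev1.mono ha0
  have hb0' : ∀ᶠ p in atTop, 0 ≤ b p := hev1.mono hb0
  have hbC : ∀ᶠ p in atTop, b p ≤ C := hev1.mono hC
  have hA0 : 0 ≤ A := ge_of_tendsto haA ha0'
  -- c is eventually bounded below by a, b
  have hac : ∀ᶠ p in atTop, a p ≤ c p :=
    hev1.mono fun p hp => aux_le_rpow hp (ha0 p hp) (hb0 p hp)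
  have hbc : ∀ᶠ p in atTop, b p ≤ c p := by
    refine hev1.mono fun p hp => ?_
    have := aux_le_rpow hp (hb0 p hp) (ha0 p hp)
    rwa [add_comm] at this
  have hc0 : ∀ᶠ p in atTop, 0 ≤ c p := by
    filter_upwards [ha0', hac] with p h1 h2; linarith
  -- upper bound on c
  have haA1 : ∀ᶠ p in atTop, a p ≤ A + 1 := haA.eventually_le_const (by linarith)
  have h2le : ∀ᶠ p : ℕ in atTop, (2:ℝ) ^ ((p:ℝ)⁻¹) ≤ 2 := by
    refine hev1.mono fun p hp => ?_
    calc (2:ℝ) ^ ((p:ℝ)⁻¹) ≤ (2:ℝ) ^ (1:ℝ) := by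
          apply Real.rpow_le_rpow_of_exponent_le one_le_two
          rw [inv_le_one_iff₀]; right; exact_mod_cast hp
      _ = 2 := Real.rpow_one 2
  have hcub : ∀ᶠ p in atTop, c p ≤ 2 * max (A + 1) C := by
    filter_upwards [hev1, haA1, hbC, h2le, ha0', hb0'] with p hp h1 h2 h3 h4 h5
    have hmm : max (a p) (b p) ≤ max (A + 1) C := max_le_max h1 h2
    have hmn : (0:ℝ) ≤ max (a p) (b p) := le_max_of_le_left h4
    calc c p ≤ (2:ℝ) ^ ((p:ℝ)⁻¹) * max (a p) (b p) := aux_rpow_le hp h4 h5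
      _ ≤ 2 * max (A + 1) C := by
          apply mul_le_mul h3 hmm hmn (by norm_num)
  have hcBddBelow : atTop.IsBoundedUnder (· ≥ ·) c := ⟨0, by simpa using hc0⟩
  have hcCobdd : atTop.IsCoboundedUnder (· ≥ ·) c :=
    Filter.isCoboundedUnder_ge_of_eventually_le atTop hcub
  have hbBddBelow : atTop.IsBoundedUnder (· ≥ ·) b := ⟨0, by simpa using hb0'⟩
  have hbCobdd : atTop.IsCoboundedUnder (· ≥ ·) b :=
    Filter.isCoboundedUnder_ge_of_eventually_le atTop hbC
  have hB0 : 0 ≤ B := hbB ▸ Filter.le_liminf_of_le hbCobdd hb0'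
  have hM0 : 0 ≤ max A B := le_max_of_le_left hA0
  -- lower bound: max A B ≤ liminf c
  have hlow : max A B ≤ Filter.liminf c atTop := by
    refine max_le ?_ ?_
    · calc A = Filter.liminf a atTop := haA.liminf_eq.symm
        _ ≤ Filter.liminf c atTop := Filter.liminf_le_liminf hac ⟨0, by simpa using ha0'⟩ hcCobdd
    · calc B = Filter.liminf b atTop := hbB.symm
        _ ≤ Filter.liminf c atTop := Filter.liminf_le_liminf hbc hbBddBelow hcCobdd
  -- 2^(1/p) → 1
  have h2t : Tendsto (fun p : ℕ => (2:ℝ) ^ ((p:ℝ)⁻¹)) atTop (nhds 1) := by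
    have h0 : Tendsto (fun p : ℕ => ((p:ℝ)⁻¹)) atTop (nhds 0) :=
      tendsto_inv_atTop_zero.comp tendsto_natCast_atTop_atTop
    have := (Real.continuousAt_const_rpow (a := 2) (b := 0) two_ne_zero).tendsto.comp h0
    simpa [Function.comp_def] using this
  -- upper bound : liminf c ≤ max A B
  have hupp : Filter.liminf c atTop ≤ max A B := by
    set M := max A B with hM
    apply le_of_forall_pos_le_add
    intro ε hε
    set δ : ℝ := min 1 (ε / (M + 2)) with hδdef
    have hδ : 0 < δ := lt_min one_pos (by positivity)
    have hδ1 : δ ≤ 1 := min_le_left _ _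
    have hδ2 : δ * (M + 2) ≤ ε := by
      rw [← le_div_iff₀ (by linarith)]
      exact min_le_right _ _
    have hkey : (1 + δ) * (M + δ) ≤ M + ε := by nlinarith
    have hfreq : ∃ᶠ p in atTop, b p < B + δ :=
      Filter.frequently_lt_of_liminf_lt hbCobdd (by rw [hbB]; linarith)
    have haAδ : ∀ᶠ p in atTop, a p ≤ A + δ := haA.eventually_le_const (by linarith)
    have h2δ : ∀ᶠ p : ℕ in atTop, (2:ℝ) ^ ((p:ℝ)⁻¹) ≤ 1 + δ :=
      h2t.eventually_le_const (by linarith)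
    have hfr : ∃ᶠ p in atTop, c p ≤ M + ε := by
      refine (hfreq.and_eventually (hev1.and (haAδ.and h2δ))).mono ?_
      rintro p ⟨hbp, hp, hap, h2p⟩
      have h4 := ha0 p hp
      have h5 := hb0 p hp
      have hmn : (0:ℝ) ≤ max (a p) (b p) := le_max_of_le_left h4
      calc c p ≤ (2:ℝ) ^ ((p:ℝ)⁻¹) * max (a p) (b p) := aux_rpow_le hp h4 h5
        _ ≤ (1 + δ) * (M + δ) := by
            apply mul_le_mul h2p ?_ hmn (by linarith)
            have : max (a p) (b p) ≤ max (A + δ) (B + δ) :=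
              max_le_max hap hbp.le
            simpa [max_add_add_right] using this
        _ ≤ M + ε := hkey
    exact Filter.liminf_le_of_frequently_le hfr hcBddBelow
  linarith [le_antisymm hupp hlow]
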